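/- L^r-stability of the L^2-orthogonal projection onto polynomials: let d ≥ 1, k ∈ ℕ, γ_0 > 0 and r ∈ [1, ∞]. There exists a constant C > 0, depending only on d, k, γ_0, r, such that for every bounded open set K ⊂ ℝ^d of diameter h_K that is star-shaped with respect to every point of a ball of radius ρ_K ≥ γ_0 h_K contained in K, and every v ∈ L^2(K) ∩ L^r(K), the L^2(K)-orthogonal projection Π_K^{0,k} v of v onto the space of polynomials of total degree at most k satisfies ‖Π_K^{0,k} v‖_{L^r(K)} ≤ C ‖v‖_{L^r(K)}. -/

import Mathlib

open MeasureTheory ENNReal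

/-- `K` is a bounded open subset of `ℝ^d` of diameter `h_K` that is star-shaped with
respect to every point of a ball of radius `ρ_K ≥ γ₀ h_K` contained in `K`. -/
def IsStarShapedCell {d : ℕ} (γ₀ : ℝ) (K : Set (Fin d → ℝ)) : Prop :=
  IsOpen K ∧ Bornology.IsBounded K ∧
    ∃ x₀ ρ, γ₀ * Metric.diam K ≤ ρ ∧ Metric.ball x₀ ρ ⊆ K ∧
      ∀ y ∈ Metric.ball x₀ ρ, StarConvex ℝ y K

/-- `Q` is the `L²(K)`-orthogonal projection of `v` onto polynomials of total degree at
most `k`: a polynomial of total degree at most `k` with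
`∫_K (Q - v) m = 0` for every polynomial `m` of total degree at most `k`. -/
def IsL2Projection {d : ℕ} (k : ℕ) (K : Set (Fin d → ℝ)) (v : (Fin d → ℝ) → ℝ)
    (Q : MvPolynomial (Fin d) ℝ) : Prop :=
  Q.totalDegree ≤ k ∧
    ∀ m : MvPolynomial (Fin d) ℝ, m.totalDegree ≤ k →
      ∫ x in K, (MvPolynomial.eval x Q - v x) * MvPolynomial.eval x m = 0


open Metric MvPolynomial
open scoped Pointwise

lemma mv_eq_zero_of_ball {d : ℕ} {p : MvPolynomial (Fin d) ℝ}
    (hp : ∀ x ∈ Metric.ball (0 : Fin d → ℝ) 1, MvPolynomial.eval x p = 0) : p = 0 := by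
  have key : ∀ x : Fin d → ℝ, MvPolynomial.eval x p = 0 := by
    intro x
    set q : Polynomial ℝ :=
      MvPolynomial.eval₂ Polynomial.C (fun i => Polynomial.C (x i) * Polynomial.X) p with hq
    have heval : ∀ t : ℝ, Polynomial.eval t q = MvPolynomial.eval (fun i => x i * t) p := by
      intro t
      rw [hq, show (Polynomial.eval t q) = (Polynomial.evalRingHom t) q from rfl, hq,
        MvPolynomial.eval₂_comp_left (Polynomial.evalRingHom t) Polynomial.C
          (fun i => Polynomial.C (x i) * Polynomial.X) p]
      have h1 : (Polynomial.evalRingHom t).comp Polynomial.C = RingHom.id ℝ := by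
        ext a; simp
      have h2 : ((Polynomial.evalRingHom t) ∘ fun i => Polynomial.C (x i) * Polynomial.X)
          = fun i => x i * t := by
        funext i; simp
      rw [h1, h2]
      rfl
    set ε : ℝ := (‖x‖ + 1)⁻¹ with hε
    have hεpos : 0 < ε := by positivity
    have hq0 : q = 0 := by
      apply Polynomial.eq_zero_of_infinite_isRoot
      apply Set.Infinite.mono (s := Set.Ioo (-ε) ε) _ (Set.Ioo_infinite (by linarith))
      intro t ht
      simp only [Set.mem_setOf_eq, Polynomial.IsRoot, heval t]
      apply hp
      simp only [Metric.mem_ball, dist_zero_right]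
      have hxt : ‖fun i => x i * t‖ ≤ ‖x‖ * |t| := by
        rw [show (fun i => x i * t) = t • x by funext i; simp [mul_comm]]
        simp [norm_smul, abs_mul, mul_comm]
      have ht' : |t| < ε := abs_lt.2 ⟨ht.1, ht.2⟩
      calc ‖fun i => x i * t‖ ≤ ‖x‖ * |t| := hxt
        _ < 1 := by
          rcases eq_or_lt_of_le (abs_nonneg t) with h0 | h0
          · rw [← h0, mul_zero]; norm_num
          · have step1 : ‖x‖ * |t| < (‖x‖ + 1) * ε :=
              mul_lt_mul' (by linarith) ht' (abs_nonneg t) (by positivity)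
            have step2 : (‖x‖ + 1) * ε = 1 := by
              rw [hε, mul_inv_cancel₀ (by positivity)]
            linarith
    have := heval 1
    rw [hq0] at this
    simpa using this.symm
  have := MvPolynomial.funext (p := p) (q := 0) (by simpa using key)
  simpa using this

noncomputable def sIdx (d k : ℕ) : Finset (Fin d →₀ ℕ) :=
  Finset.Iic (Finsupp.equivFunOnFinite.symm fun _ => k)

lemma mem_sIdx {d k : ℕ} {m : Fin d →₀ ℕ} : m ∈ sIdx d k ↔ ∀ i, m i ≤ k := by
  simp [sIdx, Finset.mem_Iic, Finsupp.le_def]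

attribute [irreducible] sIdx

lemma mem_sIdx_of_support {d k : ℕ} {p : MvPolynomial (Fin d) ℝ} (hp : p.totalDegree ≤ k)
    {m : Fin d →₀ ℕ} (hm : m ∈ p.support) : m ∈ sIdx d k := by
  rw [mem_sIdx]
  intro i
  have h1 : m i ≤ p.degreeOf i := MvPolynomial.monomial_le_degreeOf i hm
  have h2 : p.degreeOf i ≤ p.totalDegree := MvPolynomial.degreeOf_le_totalDegree p i
  simpa using h1.trans (h2.trans hp)

noncomputable def Phi (d k : ℕ) (c : {m // m ∈ sIdx d k} → ℝ) : MvPolynomial (Fin d) ℝ :=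
  ∑ m : {m // m ∈ sIdx d k}, MvPolynomial.monomial m.1 (c m)

lemma eval_Phi (d k : ℕ) (c : {m // m ∈ sIdx d k} → ℝ) (x : Fin d → ℝ) :
    MvPolynomial.eval x (Phi d k c) =
      ∑ m : {m // m ∈ sIdx d k}, c m * (m.1.prod fun i e => x i ^ e) := by
  rw [Phi, map_sum]
  simp [MvPolynomial.eval_monomial]

lemma continuous_monfun (d k : ℕ) (m : Fin d →₀ ℕ) :
    Continuous (fun x : Fin d → ℝ => m.prod fun i e => x i ^ e) := by
  apply continuous_finset_prod
  intro i _
  exact (continuous_apply i).pow _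

lemma integrable_monmul (d : ℕ) (m m' : Fin d →₀ ℕ) :
    IntegrableOn (fun x : Fin d → ℝ =>
      (m.prod fun i e => x i ^ e) * (m'.prod fun i e => x i ^ e))
      (Metric.ball (0 : Fin d → ℝ) 1) volume := by
  apply (((continuous_monfun d 0 m).mul (continuous_monfun d 0 m')).continuousOn.integrableOn_compact
    (isCompact_closedBall (0 : Fin d → ℝ) 1)).mono_set Metric.ball_subset_closedBall

lemma Phi_coeff (d k : ℕ) (c : {m // m ∈ sIdx d k} → ℝ) (m : {m // m ∈ sIdx d k}) :
    MvPolynomial.coeff m.1 (Phi d k c) = c m := by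
  rw [Phi]
  rw [MvPolynomial.coeff_sum]
  rw [Finset.sum_eq_single m]
  · simp [MvPolynomial.coeff_monomial]
  · intro b _ hb
    rw [MvPolynomial.coeff_monomial]
    rw [if_neg]
    intro h
    exact hb (Subtype.ext h)
  · simp

lemma Phi_eq_self {d k : ℕ} {p : MvPolynomial (Fin d) ℝ} (hp : p.totalDegree ≤ k) :
    Phi d k (fun m => MvPolynomial.coeff m.1 p) = p := by
  rw [Phi]
  rw [Finset.sum_coe_sort (sIdx d k) (fun m => MvPolynomial.monomial m (MvPolynomial.coeff m p))]
  rw [← Finset.sum_subset (fun m hm => mem_sIdx_of_support hp hm)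
    (fun m _ hm => by simp [MvPolynomial.notMem_support_iff.mp hm])]
  exact MvPolynomial.support_sum_monomial_coeff p

lemma poly_sup_le_L2 (d k : ℕ) (R : ℝ) :
    ∃ C : ℝ, 0 < C ∧ ∀ p : MvPolynomial (Fin d) ℝ, p.totalDegree ≤ k →
      ∀ y ∈ Metric.closedBall (0 : Fin d → ℝ) R,
        |MvPolynomial.eval y p| ≤
          C * Real.sqrt (∫ x in Metric.ball (0 : Fin d → ℝ) 1,
            (MvPolynomial.eval x p)^2) := by
  classical
  haveI hne : Nonempty {m // m ∈ sIdx d k} :=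
    ⟨⟨0, mem_sIdx.mpr fun i => Nat.zero_le k⟩⟩
  set g : ({m // m ∈ sIdx d k} → ℝ) → ℝ :=
    fun c => ∫ x in Metric.ball (0 : Fin d → ℝ) 1, (MvPolynomial.eval x (Phi d k c))^2
    with hg
  -- the quadratic-form formula
  have hgf : ∀ c, g c = ∑ m : {m // m ∈ sIdx d k}, ∑ m' : {m // m ∈ sIdx d k},
      c m * c m' * ∫ x in Metric.ball (0 : Fin d → ℝ) 1,
        (m.1.prod fun i e => x i ^ e) * (m'.1.prod fun i e => x i ^ e) := by
    intro c
    rw [hg]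
    have : ∀ x : Fin d → ℝ, (MvPolynomial.eval x (Phi d k c))^2 =
        ∑ m : {m // m ∈ sIdx d k}, ∑ m' : {m // m ∈ sIdx d k},
          c m * c m' * ((m.1.prod fun i e => x i ^ e) * (m'.1.prod fun i e => x i ^ e)) := by
      intro x
      rw [eval_Phi, sq, Finset.sum_mul_sum]
      apply Finset.sum_congr rfl; intro m _
      apply Finset.sum_congr rfl; intro m' _
      ring
    simp_rw [this]
    rw [integral_finset_sum]
    · apply Finset.sum_congr rfl; intro m _
      rw [integral_finset_sum]
      · apply Finset.sum_congr rfl; intro m' _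
        exact integral_const_mul _ _
      · intro m' _
        exact (integrable_monmul d m.1 m'.1).const_mul _
    · intro m _
      apply integrable_finset_sum
      intro m' _
      exact (integrable_monmul d m.1 m'.1).const_mul _
  have hgcont : Continuous g := by
    simp_rw [funext hgf]
    apply continuous_finset_sum; intro m _
    apply continuous_finset_sum; intro m' _
    exact (((continuous_apply m).mul (continuous_apply m')).mul continuous_const)
  -- positivity away from zero
  have hgpos : ∀ c, c ≠ 0 → 0 < g c := by
    intro c hc
    rw [hg]
    have hcont : Continuous fun x : Fin d → ℝ => (MvPolynomial.eval x (Phi d k c))^2 := by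
      have : Continuous fun x : Fin d → ℝ => MvPolynomial.eval x (Phi d k c) := by
        simp_rw [funext (eval_Phi d k c)]
        exact continuous_finset_sum _ fun m _ =>
          continuous_const.mul (continuous_monfun d k m.1)
      exact this.pow 2
    have hPhi : Phi d k c ≠ 0 := by
      intro h
      apply hc
      funext m
      rw [← Phi_coeff d k c m, h]
      simp
    have hy : ∃ y ∈ Metric.ball (0 : Fin d → ℝ) 1, MvPolynomial.eval y (Phi d k c) ≠ 0 := by
      by_contra h
      push_neg at h
      exact hPhi (mv_eq_zero_of_ball h)
    obtain ⟨y, hy1, hy2⟩ := hy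
    rw [setIntegral_pos_iff_support_of_nonneg_ae]
    · apply lt_of_lt_of_le _ (measure_mono
        (Set.inter_subset_inter_left _ (subset_refl _)))
      have hopen : IsOpen (Function.support (fun x : Fin d → ℝ =>
          (MvPolynomial.eval x (Phi d k c))^2) ∩ Metric.ball (0 : Fin d → ℝ) 1) :=
        (hcont.isOpen_support).inter Metric.isOpen_ball
      apply hopen.measure_pos volume
      exact ⟨y, by simp [Function.mem_support, pow_eq_zero_iff, hy2], hy1⟩
    · filter_upwards with x using sq_nonneg _
    · exact ((hcont.continuousOn).integrableOn_compact
        (isCompact_closedBall (0 : Fin d → ℝ) 1)).mono_set Metric.ball_subset_closedBall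
  -- homogeneity
  have hghom : ∀ (t : ℝ) (c), g (t • c) = t^2 * g c := by
    intro t c
    rw [hg]
    have hPhi : Phi d k (t • c) = t • Phi d k c := by
      rw [Phi, Phi, Finset.smul_sum]
      apply Finset.sum_congr rfl; intro m _
      simp [MvPolynomial.smul_monomial]
    simp_rw [hPhi, MvPolynomial.smul_eq_C_mul, map_mul, MvPolynomial.eval_C, mul_pow]
    exact integral_const_mul _ _
  -- minimum on the sphere
  haveI : Nontrivial ({m // m ∈ sIdx d k} → ℝ) := by
    obtain ⟨m⟩ := hne
    exact ⟨fun _ => 0, fun _ => 1, fun h => by simpa using congrFun h m⟩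
  have hsph : (Metric.sphere (0 : {m // m ∈ sIdx d k} → ℝ) 1).Nonempty :=
    NormedSpace.sphere_nonempty.mpr zero_le_one
  obtain ⟨c₀, hc₀s, hc₀min⟩ :=
    (isCompact_sphere (0 : {m // m ∈ sIdx d k} → ℝ) 1).exists_isMinOn hsph
      hgcont.continuousOn
  set ε : ℝ := g c₀ with hε
  have hεpos : 0 < ε := by
    apply hgpos
    intro h
    rw [h] at hc₀s
    simp at hc₀s
  -- lower bound: ε * ‖c‖² ≤ g c
  have hlow : ∀ c, ε * ‖c‖^2 ≤ g c := by
    intro c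
    rcases eq_or_ne c 0 with rfl | hc
    · have : g 0 = 0 := by
        have h0 : Phi d k (0 : {m // m ∈ sIdx d k} → ℝ) = 0 := by
          rw [Phi]; simp
        rw [hg]; simp_rw [h0]; simp
      simp [this]
    · have hnc : ‖c‖ ≠ 0 := norm_ne_zero_iff.mpr hc
      have hu : (‖c‖⁻¹ • c) ∈ Metric.sphere (0 : {m // m ∈ sIdx d k} → ℝ) 1 := by
        simp [norm_smul, abs_of_nonneg (norm_nonneg c), inv_mul_cancel₀ hnc]
      have h1 : ε ≤ g (‖c‖⁻¹ • c) := hc₀min hu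
      have h2 : g (‖c‖⁻¹ • c) = (‖c‖⁻¹)^2 * g c := hghom _ _
      rw [h2] at h1
      have h3 : ε * ‖c‖^2 ≤ ((‖c‖⁻¹)^2 * g c) * ‖c‖^2 := by
        apply mul_le_mul_of_nonneg_right h1 (sq_nonneg _)
      calc ε * ‖c‖^2 ≤ ((‖c‖⁻¹)^2 * g c) * ‖c‖^2 := h3
        _ = g c := by field_simp
  -- pointwise bound on the closed ball
  set M : ℝ := max R 1 with hM
  have hM1 : 1 ≤ M := le_max_right _ _
  set B : ℝ := (Finset.univ.card (α := {m // m ∈ sIdx d k})) * M^(d*k) with hB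
  have hBpos : 0 < M^(d*k) := by positivity
  have hbound : ∀ (c) (y : Fin d → ℝ), y ∈ Metric.closedBall (0 : Fin d → ℝ) R →
      |MvPolynomial.eval y (Phi d k c)| ≤ B * ‖c‖ := by
    intro c y hy
    rw [eval_Phi]
    have hyi : ∀ i, |y i| ≤ M := by
      intro i
      calc |y i| ≤ ‖y‖ := by
            simpa using norm_le_pi_norm y i
        _ ≤ R := by simpa [dist_eq_norm] using hy
        _ ≤ M := le_max_left _ _
    have hterm : ∀ m : {m // m ∈ sIdx d k},
        |c m * (m.1.prod fun i e => y i ^ e)| ≤ ‖c‖ * M^(d*k) := by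
      intro m
      rw [abs_mul]
      apply mul_le_mul
      · simpa using norm_le_pi_norm c m
      · -- |∏ y i ^ e| ≤ M^(d*k)
        rw [Finsupp.prod]
        rw [Finset.abs_prod]
        calc ∏ i ∈ m.1.support, |y i ^ m.1 i|
            ≤ ∏ i ∈ m.1.support, M ^ m.1 i := by
              apply Finset.prod_le_prod
              · intro i _; positivity
              · intro i _
                rw [abs_pow]
                exact pow_le_pow_left₀ (abs_nonneg _) (hyi i) _
          _ = M ^ (∑ i ∈ m.1.support, m.1 i) := by rw [Finset.prod_pow_eq_pow_sum]
          _ ≤ M ^ (d*k) := by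
              apply pow_le_pow_right₀ hM1
              calc ∑ i ∈ m.1.support, m.1 i ≤ ∑ _i ∈ m.1.support, k := by
                    apply Finset.sum_le_sum
                    intro i _
                    exact mem_sIdx.mp m.2 i
                _ = m.1.support.card * k := by simp [Finset.sum_const, mul_comm]
                _ ≤ d * k := by
                    apply Nat.mul_le_mul_right
                    simpa using Finset.card_le_card (Finset.subset_univ m.1.support)
      · exact abs_nonneg _
      · exact norm_nonneg _
    calc |∑ m : {m // m ∈ sIdx d k}, c m * (m.1.prod fun i e => y i ^ e)|
        ≤ ∑ m : {m // m ∈ sIdx d k}, |c m * (m.1.prod fun i e => y i ^ e)| :=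
          Finset.abs_sum_le_sum_abs _ _
      _ ≤ ∑ _m : {m // m ∈ sIdx d k}, ‖c‖ * M^(d*k) :=
          Finset.sum_le_sum fun m _ => hterm m
      _ = B * ‖c‖ := by
          rw [Finset.sum_const, nsmul_eq_mul, hB]
          ring
  have hBpos' : 0 < B := by
    have h0 : 0 < (Finset.univ.card (α := {m // m ∈ sIdx d k})) :=
      Finset.card_pos.mpr ⟨Classical.arbitrary _, Finset.mem_univ _⟩
    rw [hB]
    exact mul_pos (by exact_mod_cast h0) hBpos
  refine ⟨B / Real.sqrt ε, by positivity, ?_⟩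
  intro p hp y hy
  set c : {m // m ∈ sIdx d k} → ℝ := fun m => MvPolynomial.coeff m.1 p with hc
  have hpc : Phi d k c = p := Phi_eq_self hp
  have h1 : |MvPolynomial.eval y p| ≤ B * ‖c‖ := by
    rw [← hpc]; exact hbound c y hy
  have h2 : ‖c‖ ≤ Real.sqrt (g c) / Real.sqrt ε := by
    rw [le_div_iff₀ (Real.sqrt_pos.mpr hεpos)]
    have h3 : (‖c‖ * Real.sqrt ε)^2 ≤ g c := by
      rw [mul_pow, Real.sq_sqrt hεpos.le]
      calc ‖c‖^2 * ε = ε * ‖c‖^2 := by ring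
        _ ≤ g c := hlow c
    calc ‖c‖ * Real.sqrt ε = Real.sqrt ((‖c‖ * Real.sqrt ε)^2) := by
          rw [Real.sqrt_sq (by positivity)]
      _ ≤ Real.sqrt (g c) := Real.sqrt_le_sqrt h3
  have hgc : g c = ∫ x in Metric.ball (0 : Fin d → ℝ) 1, (MvPolynomial.eval x p)^2 := by
    simp only [hg, hpc]
  calc |MvPolynomial.eval y p| ≤ B * ‖c‖ := h1
    _ ≤ B * (Real.sqrt (g c) / Real.sqrt ε) :=
        mul_le_mul_of_nonneg_left h2 hBpos'.le
    _ = (B / Real.sqrt ε) * Real.sqrt (g c) := by ring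
    _ = (B / Real.sqrt ε) * Real.sqrt (∫ x in Metric.ball (0 : Fin d → ℝ) 1,
          (MvPolynomial.eval x p)^2) := by rw [hgc]

noncomputable def subAff {d : ℕ} (x₀ : Fin d → ℝ) (ρ : ℝ) (p : MvPolynomial (Fin d) ℝ) :
    MvPolynomial (Fin d) ℝ :=
  MvPolynomial.aeval (fun i => MvPolynomial.C (x₀ i) + MvPolynomial.C ρ * MvPolynomial.X i) p

lemma aeval_eq_eval' {d : ℕ} (w : Fin d → ℝ) (q : MvPolynomial (Fin d) ℝ) :
    (MvPolynomial.aeval w : MvPolynomial (Fin d) ℝ →ₐ[ℝ] ℝ) q = MvPolynomial.eval w q := by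
  rw [← MvPolynomial.coe_aeval_eq_eval]; rfl

lemma eval_subAff {d : ℕ} (x₀ : Fin d → ℝ) (ρ : ℝ) (p : MvPolynomial (Fin d) ℝ)
    (z : Fin d → ℝ) :
    MvPolynomial.eval z (subAff x₀ ρ p) = MvPolynomial.eval (x₀ + ρ • z) p := by
  rw [subAff, ← aeval_eq_eval']
  rw [MvPolynomial.comp_aeval_apply]
  rw [aeval_eq_eval']
  have harg : (fun i => (MvPolynomial.aeval z)
      (MvPolynomial.C (x₀ i) + MvPolynomial.C ρ * MvPolynomial.X i)) = x₀ + ρ • z := by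
    funext i
    simp [Pi.add_apply, Pi.smul_apply, smul_eq_mul]
  rw [harg]

lemma totalDegree_subAff {d k : ℕ} (x₀ : Fin d → ℝ) (ρ : ℝ) {p : MvPolynomial (Fin d) ℝ}
    (hp : p.totalDegree ≤ k) : (subAff x₀ ρ p).totalDegree ≤ k := by
  rw [subAff]
  conv_lhs => rw [p.as_sum, map_sum]
  apply le_trans (MvPolynomial.totalDegree_finset_sum _ _)
  apply Finset.sup_le
  intro v hv
  rw [MvPolynomial.aeval_monomial]
  apply le_trans (MvPolynomial.totalDegree_mul _ _)
  have h1 : (algebraMap ℝ (MvPolynomial (Fin d) ℝ) (MvPolynomial.coeff v p)).totalDegree = 0 :=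
    MvPolynomial.totalDegree_C _
  rw [h1, zero_add]
  rw [Finsupp.prod]
  apply le_trans (MvPolynomial.totalDegree_finset_prod _ _)
  calc ∑ i ∈ v.support,
        ((MvPolynomial.C (x₀ i) + MvPolynomial.C ρ * MvPolynomial.X i) ^ v i).totalDegree
      ≤ ∑ i ∈ v.support, v i * 1 := by
        apply Finset.sum_le_sum
        intro i _
        apply le_trans (MvPolynomial.totalDegree_pow _ _)
        apply Nat.mul_le_mul_left
        apply le_trans (MvPolynomial.totalDegree_add _ _)
        apply max_le
        · simp [MvPolynomial.totalDegree_C]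
        · apply le_trans (MvPolynomial.totalDegree_mul _ _)
          simp [MvPolynomial.totalDegree_C, MvPolynomial.totalDegree_X]
    _ = ∑ i ∈ v.support, v i := by simp
    _ ≤ k := le_trans (MvPolynomial.le_totalDegree hv) hp

lemma integral_ball_scale {d : ℕ} (x₀ : Fin d → ℝ) {ρ : ℝ} (hρ : 0 < ρ)
    (f : (Fin d → ℝ) → ℝ) :
    ∫ x in Metric.ball x₀ ρ, f x =
      ρ^d * ∫ z in Metric.ball (0 : Fin d → ℝ) 1, f (x₀ + ρ • z) := by
  have hd : Module.finrank ℝ (Fin d → ℝ) = d := Module.finrank_fin_fun ℝ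
  have h1 : ∫ z in Metric.ball (0 : Fin d → ℝ) 1, f (x₀ + ρ • z)
      = (ρ^d)⁻¹ • ∫ x in ρ • Metric.ball (0 : Fin d → ℝ) 1, f (x₀ + x) := by
    rw [MeasureTheory.Measure.setIntegral_comp_smul_of_pos volume
      (fun x => f (x₀ + x)) (Metric.ball (0 : Fin d → ℝ) 1) hρ, hd]
  rw [smul_unitBall_of_pos hρ] at h1
  have h2 : ∫ x in Metric.ball (0 : Fin d → ℝ) ρ, f (x₀ + x)
      = ∫ x in Metric.ball x₀ ρ, f x := by
    rw [← integral_indicator measurableSet_ball, ← integral_indicator measurableSet_ball]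
    rw [← integral_add_left_eq_self
      (fun x => (Metric.ball x₀ ρ).indicator f x) x₀]
    congr 1
    funext x
    by_cases hx : x ∈ Metric.ball (0 : Fin d → ℝ) ρ
    · rw [Set.indicator_of_mem hx, Set.indicator_of_mem]
      simpa [dist_eq_norm] using hx
    · rw [Set.indicator_of_notMem hx, Set.indicator_of_notMem]
      intro hmem
      apply hx
      simpa [dist_eq_norm] using hmem
  rw [h1, h2, smul_eq_mul, ← mul_assoc, mul_inv_cancel₀ (by positivity), one_mul]

lemma poly_sup_le_L2_scaled (d k : ℕ) (R : ℝ) :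
    ∃ C : ℝ, 0 < C ∧ ∀ (x₀ : Fin d → ℝ) (ρ : ℝ), 0 < ρ →
      ∀ p : MvPolynomial (Fin d) ℝ, p.totalDegree ≤ k →
      ∀ y ∈ Metric.closedBall x₀ (ρ * R),
        |MvPolynomial.eval y p| ≤
          C * Real.sqrt ((ρ^d)⁻¹ * ∫ x in Metric.ball x₀ ρ, (MvPolynomial.eval x p)^2) := by
  obtain ⟨C, hC, hbd⟩ := poly_sup_le_L2 d k R
  refine ⟨C, hC, ?_⟩
  intro x₀ ρ hρ p hp y hy
  set z : Fin d → ℝ := ρ⁻¹ • (y - x₀) with hz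
  have hzy : x₀ + ρ • z = y := by
    rw [hz, smul_smul, mul_inv_cancel₀ hρ.ne', one_smul]
    abel
  have hzball : z ∈ Metric.closedBall (0 : Fin d → ℝ) R := by
    rw [Metric.mem_closedBall, dist_zero_right, hz, norm_smul, norm_inv,
      Real.norm_of_nonneg hρ.le]
    rw [Metric.mem_closedBall, dist_eq_norm] at hy
    rw [inv_mul_le_iff₀ hρ]
    exact hy
  have h1 : MvPolynomial.eval y p = MvPolynomial.eval z (subAff x₀ ρ p) := by
    rw [eval_subAff, hzy]
  have h2 := hbd (subAff x₀ ρ p) (totalDegree_subAff x₀ ρ hp) z hzball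
  rw [← h1] at h2
  have h3 : ∫ x in Metric.ball (0 : Fin d → ℝ) 1, (MvPolynomial.eval x (subAff x₀ ρ p))^2
      = (ρ^d)⁻¹ * ∫ x in Metric.ball x₀ ρ, (MvPolynomial.eval x p)^2 := by
    rw [integral_ball_scale x₀ hρ (fun x => (MvPolynomial.eval x p)^2)]
    rw [← mul_assoc, inv_mul_cancel₀ (by positivity), one_mul]
    apply MeasureTheory.integral_congr_ae
    filter_upwards with x
    rw [eval_subAff]
  rw [h3] at h2
  exact h2

/-- `L^r`-stability of the `L²`-orthogonal projection onto polynomials: for `r ∈ [1, ∞]`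
there is `C > 0`, depending only on `d, k, γ₀, r`, such that for every star-shaped cell
`K` and every `v ∈ L²(K) ∩ L^r(K)`, the projection `Π_K^{0,k} v` satisfies
`‖Π_K^{0,k} v‖_{L^r(K)} ≤ C ‖v‖_{L^r(K)}`. -/
theorem l2_projection_lr_stability (d k : ℕ) (hd : 1 ≤ d) (γ₀ : ℝ) (hγ₀ : 0 < γ₀)
    (r : ℝ≥0∞) (hr : 1 ≤ r) :
    ∃ C : ℝ, 0 < C ∧
      ∀ K : Set (Fin d → ℝ), IsStarShapedCell γ₀ K →
      ∀ v : (Fin d → ℝ) → ℝ,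
        MemLp v 2 (volume.restrict K) → MemLp v r (volume.restrict K) →
      ∀ Q : MvPolynomial (Fin d) ℝ, IsL2Projection k K v Q →
        eLpNorm (fun x => MvPolynomial.eval x Q) r (volume.restrict K) ≤
          ENNReal.ofReal C * eLpNorm v r (volume.restrict K) := by
  obtain ⟨C₁, hC₁, hsup⟩ := poly_sup_le_L2_scaled d k (1/γ₀)
  refine ⟨(C₁^2 + 1) * (2/γ₀)^d, by positivity, ?_⟩
  intro K hK v hv2 hvr Q hQ
  obtain ⟨hKopen, hKbd, x₀, ρ, hργ, hball, hstar⟩ := hK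
  rcases Set.eq_empty_or_nonempty K with rfl | hKne
  · simp only [Measure.restrict_empty, eLpNorm_measure_zero]
    exact zero_le
  -- K is nonempty: basic geometric facts
  obtain ⟨y₀, hy₀⟩ := hKne
  obtain ⟨ε, hε, hεball⟩ := Metric.isOpen_iff.mp hKopen y₀ hy₀
  have hdiam : 0 < Metric.diam K := by
    set y₁ : Fin d → ℝ := y₀ + fun _ => ε/2 with hy₁
    have hy₁K : y₁ ∈ K := by
      apply hεball
      rw [Metric.mem_ball, dist_eq_norm, hy₁]
      simp only [add_sub_cancel_left]
      have : ‖fun _ : Fin d => ε/2‖ ≤ ε/2 := by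
        apply pi_norm_le_iff_of_nonneg (by positivity) |>.mpr
        intro i
        simp [abs_of_nonneg (by positivity : (0:ℝ) ≤ ε/2), abs_of_nonneg hε.le]
      linarith
    have hdist : dist y₁ y₀ = ε/2 := by
      rw [hy₁, dist_eq_norm]
      simp only [add_sub_cancel_left]
      have i₀ : Fin d := ⟨0, hd⟩
      apply le_antisymm
      · apply pi_norm_le_iff_of_nonneg (by positivity) |>.mpr
        intro i
        simp [abs_of_nonneg (by positivity : (0:ℝ) ≤ ε/2), abs_of_nonneg hε.le]
      · calc ε/2 = ‖(fun _ : Fin d => ε/2) i₀‖ := by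
              simp [Real.norm_eq_abs, abs_of_nonneg hε.le]
          _ ≤ ‖fun _ : Fin d => ε/2‖ := norm_le_pi_norm (fun _ : Fin d => ε/2) i₀
    calc (0:ℝ) < ε/2 := by positivity
      _ = dist y₁ y₀ := hdist.symm
      _ ≤ Metric.diam K := Metric.dist_le_diam_of_mem hKbd hy₁K hy₀
  have hρ : 0 < ρ := lt_of_lt_of_le (mul_pos hγ₀ hdiam) hργ
  have hx₀K : x₀ ∈ K := hball (Metric.mem_ball_self hρ)
  have hKsub : K ⊆ Metric.closedBall x₀ (ρ * (1/γ₀)) := by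
    intro x hx
    rw [Metric.mem_closedBall]
    calc dist x x₀ ≤ Metric.diam K := Metric.dist_le_diam_of_mem hKbd hx hx₀K
      _ ≤ ρ * (1/γ₀) := by
          rw [mul_one_div, le_div_iff₀ hγ₀]
          linarith [hργ]
  set μK := volume.restrict K with hμK
  set V := volume K with hV
  have hVfin : V ≠ ∞ := hKbd.measure_lt_top.ne
  have hVpos : 0 < V := hKopen.measure_pos volume ⟨x₀, hx₀K⟩
  haveI : IsFiniteMeasure μK := ⟨by
    rw [hμK, Measure.restrict_apply_univ]
    exact hKbd.measure_lt_top⟩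
  -- continuity / integrability
  have hQcont : Continuous fun x : Fin d → ℝ => MvPolynomial.eval x Q :=
    MvPolynomial.continuous_eval Q
  have hQ2int : IntegrableOn (fun x => (MvPolynomial.eval x Q)^2) K volume := by
    apply ((hQcont.pow 2).continuousOn.integrableOn_compact
      hKbd.isCompact_closure).mono_set subset_closure
  have hv1 : Integrable v μK := (hv2.mono_exponent (by norm_num)).integrable le_rfl
  -- sup bound on K
  set T : ℝ := ∫ x in K, (MvPolynomial.eval x Q)^2 with hT
  have hT0 : 0 ≤ T := by
    apply MeasureTheory.integral_nonneg
    intro x; positivity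
  set S : ℝ := C₁ * Real.sqrt ((ρ^d)⁻¹ * ∫ x in Metric.ball x₀ ρ,
    (MvPolynomial.eval x Q)^2) with hS
  have hSb : ∀ x ∈ K, ‖MvPolynomial.eval x Q‖ ≤ S :=
    fun x hx => hsup x₀ ρ hρ Q hQ.1 x (hKsub hx)
  have hSae : ∀ᵐ x ∂μK, ‖MvPolynomial.eval x Q‖ ≤ S :=
    ae_restrict_of_forall_mem hKopen.measurableSet hSb
  have hballT : ∫ x in Metric.ball x₀ ρ, (MvPolynomial.eval x Q)^2 ≤ T := by
    apply MeasureTheory.setIntegral_mono_set hQ2int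
    · filter_upwards with x using sq_nonneg _
    · exact HasSubset.Subset.eventuallyLE hball
  have hballnn : 0 ≤ ∫ x in Metric.ball x₀ ρ, (MvPolynomial.eval x Q)^2 := by
    apply MeasureTheory.integral_nonneg
    intro x; positivity
  have hS_le : S ≤ C₁ * Real.sqrt ((ρ^d)⁻¹) * Real.sqrt T := by
    rw [hS, Real.sqrt_mul (by positivity), mul_assoc]
    apply mul_le_mul_of_nonneg_left _ hC₁.le
    apply mul_le_mul_of_nonneg_left _ (Real.sqrt_nonneg _)
    exact Real.sqrt_le_sqrt hballT
  -- T = ∫ v Q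
  have hvQint : Integrable (fun x => v x * MvPolynomial.eval x Q) μK := by
    have h := MeasureTheory.Integrable.bdd_mul (c := S) hv1
      hQcont.aestronglyMeasurable.restrict hSae
    exact h.congr (Filter.Eventually.of_forall fun x => mul_comm _ _)
  have hTvQ : T = ∫ x in K, v x * MvPolynomial.eval x Q := by
    have h0 := hQ.2 Q hQ.1
    have hsplit : ∀ x, (MvPolynomial.eval x Q - v x) * MvPolynomial.eval x Q
        = (MvPolynomial.eval x Q)^2 - v x * MvPolynomial.eval x Q := by
      intro x; ring
    rw [MeasureTheory.integral_congr_ae (Filter.Eventually.of_forall hsplit)] at h0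
    rw [MeasureTheory.integral_sub hQ2int hvQint] at h0
    linarith [h0]
  -- exponents
  set r' : ℝ≥0∞ := (1 - r⁻¹)⁻¹ with hr'
  have hinvr : r⁻¹ ≤ 1 := ENNReal.inv_le_one.mpr hr
  have hconj : 1/(1:ℝ≥0∞) = 1/r + 1/r' := by
    rw [hr']
    simp only [one_div, inv_inv, inv_one]
    exact (add_tsub_cancel_of_le hinvr).symm
  set a : ℝ := (r.toReal)⁻¹ with ha
  set b : ℝ := (r'.toReal)⁻¹ with hb
  have hab : a + b = 1 := by
    rcases eq_or_ne r ∞ with rfl | hrtop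
    · have : r' = 1 := by
        rw [hr']; simp
      rw [ha, hb, this]; simp
    · have hrpos : (0:ℝ≥0∞) < r := lt_of_lt_of_le (by norm_num) hr
      have hrtR : 1 ≤ r.toReal := by
        rw [← ENNReal.toReal_one]
        exact ENNReal.toReal_mono hrtop hr
      rcases eq_or_ne r 1 with rfl | hr1
      · have : r' = ∞ := by
          rw [hr']; simp
        rw [ha, hb, this]; simp
      · have hrgt : 1 < r.toReal := by
          rcases lt_or_eq_of_le hrtR with h | h
          · exact h
          · exfalso; apply hr1
            have := ENNReal.toReal_eq_one_iff r |>.mp h.symm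
            exact this
        have hinvr_lt : r⁻¹ < 1 := by
          rw [ENNReal.inv_lt_one]
          rcases lt_or_eq_of_le hr with h | h
          · exact h
          · exfalso; apply hr1; exact h.symm
        have hr'fin : r' ≠ ∞ := by
          rw [hr', Ne, ENNReal.inv_eq_top, tsub_eq_zero_iff_le]
          exact fun h => absurd h (not_le.mpr hinvr_lt)
        have h1r : (1 - r⁻¹) ≠ 0 := by
          rw [Ne, tsub_eq_zero_iff_le]
          exact not_le.mpr hinvr_lt
        have hb' : b = 1 - a := by
          rw [hb, hr', ENNReal.toReal_inv, inv_inv]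
          rw [ENNReal.toReal_sub_of_le hinvr_lt.le (by norm_num)]
          rw [ENNReal.toReal_one, ENNReal.toReal_inv, ha]
        rw [hb']; ring
    -- end
  have ha0 : 0 ≤ a := by rw [ha]; positivity
  have hb0 : 0 ≤ b := by rw [hb]; positivity
  -- eLpNorm bounds via sup bound
  have hG1 : eLpNorm (fun x => MvPolynomial.eval x Q) r μK ≤ V ^ a * ENNReal.ofReal S := by
    have := MeasureTheory.eLpNorm_le_of_ae_bound (p := r) hSae
    rwa [hμK, Measure.restrict_apply_univ, ← hV, ← ha] at this
  have hG1' : eLpNorm (fun x => MvPolynomial.eval x Q) r' μK ≤ V ^ b * ENNReal.ofReal S := by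
    have := MeasureTheory.eLpNorm_le_of_ae_bound (p := r') hSae
    rwa [hμK, Measure.restrict_apply_univ, ← hV, ← hb] at this
  -- duality bound
  set Nv := eLpNorm v r μK with hNv
  have hG2 : ENNReal.ofReal T ≤ Nv * (V ^ b * ENNReal.ofReal S) := by
    have h1 : ENNReal.ofReal T ≤ ENNReal.ofReal (∫ x in K, ‖v x * MvPolynomial.eval x Q‖) := by
      apply ENNReal.ofReal_le_ofReal
      rw [hTvQ]
      calc (∫ x in K, v x * MvPolynomial.eval x Q)
          ≤ ‖∫ x in K, v x * MvPolynomial.eval x Q‖ := le_abs_self _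
        _ ≤ ∫ x in K, ‖v x * MvPolynomial.eval x Q‖ :=
            MeasureTheory.norm_integral_le_integral_norm _
    have h2 : ENNReal.ofReal (∫ x in K, ‖v x * MvPolynomial.eval x Q‖)
        = eLpNorm (fun x => v x * MvPolynomial.eval x Q) 1 μK := by
      rw [MeasureTheory.ofReal_integral_norm_eq_lintegral_enorm hvQint,
        MeasureTheory.eLpNorm_one_eq_lintegral_enorm]
    have h3 : eLpNorm (fun x => v x * MvPolynomial.eval x Q) 1 μK ≤
        eLpNorm v r μK * eLpNorm (fun x => MvPolynomial.eval x Q) r' μK := by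
      haveI : HolderTriple r r' 1 := ⟨by simpa [one_div] using hconj.symm⟩
      have h4 := MeasureTheory.eLpNorm_smul_le_mul_eLpNorm
        (f := fun x => MvPolynomial.eval x Q) (φ := v) (p := r) (q := r') (r := 1)
        hQcont.aestronglyMeasurable.restrict (hvr.1)
      have h5 : (v • fun x => MvPolynomial.eval x Q) = fun x => v x * MvPolynomial.eval x Q :=
        rfl
      rwa [h5] at h4
    calc ENNReal.ofReal T ≤ eLpNorm (fun x => v x * MvPolynomial.eval x Q) 1 μK := by
          rw [← h2]; exact h1
      _ ≤ Nv * eLpNorm (fun x => MvPolynomial.eval x Q) r' μK := h3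
      _ ≤ Nv * (V ^ b * ENNReal.ofReal S) := mul_le_mul_right hG1' _
  -- put everything together
  set u : ℝ≥0∞ := ENNReal.ofReal (Real.sqrt T) with hu
  set w : ℝ≥0∞ := ENNReal.ofReal (C₁ * Real.sqrt ((ρ^d)⁻¹)) with hw
  have huu : ENNReal.ofReal T = u * u := by
    rw [hu, ← ENNReal.ofReal_mul (Real.sqrt_nonneg _), Real.mul_self_sqrt hT0]
  have hSu : ENNReal.ofReal S ≤ w * u := by
    rw [hw, hu, ← ENNReal.ofReal_mul (by positivity)]
    exact ENNReal.ofReal_le_ofReal hS_le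
  have hufin : u ≠ ∞ := ENNReal.ofReal_ne_top
  -- case u = 0
  rcases eq_or_ne u 0 with hu0 | hu0
  · have hT0' : Real.sqrt T ≤ 0 := by
      rw [hu, ENNReal.ofReal_eq_zero] at hu0
      exact hu0
    have : T = 0 := le_antisymm (by nlinarith [Real.sqrt_nonneg T, Real.sq_sqrt hT0]) hT0
    have hS0 : S ≤ 0 := by
      calc S ≤ C₁ * Real.sqrt ((ρ^d)⁻¹) * Real.sqrt T := hS_le
        _ ≤ 0 := by
            rw [show Real.sqrt T = 0 by rw [this]; exact Real.sqrt_zero]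
            simp
    have : eLpNorm (fun x => MvPolynomial.eval x Q) r μK = 0 := by
      apply le_antisymm _ zero_le
      calc eLpNorm (fun x => MvPolynomial.eval x Q) r μK ≤ V ^ a * ENNReal.ofReal S := hG1
        _ = 0 := by
            rw [ENNReal.ofReal_eq_zero.mpr hS0, mul_zero]
    rw [this]
    exact zero_le
  -- case u ≠ 0
  have hcancel : u ≤ Nv * V ^ b * w := by
    have h := hG2
    rw [huu] at h
    have h' : u * u ≤ (Nv * V ^ b * w) * u := by
      calc u * u ≤ Nv * (V ^ b * ENNReal.ofReal S) := h
        _ ≤ Nv * (V ^ b * (w * u)) := by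
            apply mul_le_mul_right
            exact mul_le_mul_right hSu _
        _ = (Nv * V ^ b * w) * u := by ring
    exact (ENNReal.mul_le_mul_iff_left hu0 hufin).mp h'
  have hfinal : eLpNorm (fun x => MvPolynomial.eval x Q) r μK ≤ (w * w) * (V ^ a * V ^ b) * Nv := by
    calc eLpNorm (fun x => MvPolynomial.eval x Q) r μK ≤ V ^ a * ENNReal.ofReal S := hG1
      _ ≤ V ^ a * (w * u) := mul_le_mul_right hSu _
      _ ≤ V ^ a * (w * (Nv * V ^ b * w)) := by
          apply mul_le_mul_right
          exact mul_le_mul_right hcancel _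
      _ = (w * w) * (V ^ a * V ^ b) * Nv := by ring
  have hVab : V ^ a * V ^ b = V := by
    rw [← ENNReal.rpow_add a b hVpos.ne' hVfin, hab, ENNReal.rpow_one]
  rw [hVab] at hfinal
  -- bound (w*w) * V
  have hVle : V ≤ ENNReal.ofReal ((2 * (ρ * (1/γ₀)))^d) := by
    calc V ≤ volume (Metric.closedBall x₀ (ρ * (1/γ₀))) := measure_mono hKsub
      _ = ENNReal.ofReal ((2 * (ρ * (1/γ₀)))^(Fintype.card (Fin d))) :=
          Real.volume_pi_closedBall x₀ (by positivity)
      _ = ENNReal.ofReal ((2 * (ρ * (1/γ₀)))^d) := by rw [Fintype.card_fin]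
  have hww : w * w = ENNReal.ofReal (C₁^2 * (ρ^d)⁻¹) := by
    rw [hw, ← ENNReal.ofReal_mul (by positivity)]
    congr 1
    rw [show C₁ * Real.sqrt ((ρ^d)⁻¹) * (C₁ * Real.sqrt ((ρ^d)⁻¹))
      = C₁^2 * (Real.sqrt ((ρ^d)⁻¹) * Real.sqrt ((ρ^d)⁻¹)) by ring]
    rw [Real.mul_self_sqrt (by positivity)]
  have hwwV : (w * w) * V ≤ ENNReal.ofReal ((C₁^2 + 1) * (2/γ₀)^d) := by
    calc (w * w) * V ≤ ENNReal.ofReal (C₁^2 * (ρ^d)⁻¹) *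
        ENNReal.ofReal ((2 * (ρ * (1/γ₀)))^d) := by
          rw [hww]
          exact mul_le_mul_right hVle _
      _ = ENNReal.ofReal (C₁^2 * (ρ^d)⁻¹ * (2 * (ρ * (1/γ₀)))^d) :=
          (ENNReal.ofReal_mul (by positivity)).symm
      _ ≤ ENNReal.ofReal ((C₁^2 + 1) * (2/γ₀)^d) := by
          apply ENNReal.ofReal_le_ofReal
          have hcomp : C₁^2 * (ρ^d)⁻¹ * (2 * (ρ * (1/γ₀)))^d = C₁^2 * (2/γ₀)^d := by
            rw [show (2 * (ρ * (1/γ₀)))^d = ρ^d * (2/γ₀)^d by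
              rw [← mul_pow]; congr 1; field_simp]
            field_simp
          rw [hcomp]
          have : (0:ℝ) ≤ (2/γ₀)^d := by positivity
          nlinarith
  calc eLpNorm (fun x => MvPolynomial.eval x Q) r μK ≤ (w * w) * V * Nv := hfinal
    _ ≤ ENNReal.ofReal ((C₁^2 + 1) * (2/γ₀)^d) * Nv := mul_le_mul_left hwwV _
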